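/- Let G : [0,∞) → ℝ be nondecreasing and differentiable, and suppose φ : [0,∞) → ℝ is three times continuously differentiable, satisfies φ(x) > 0 for all x ≥ 0, φ(x) → 0 as x → ∞, and (σ²/2)·φ''(x) + (μ − G(x))·φ'(x) − q·φ(x) = 0 for all x > 0. Then φ is strictly decreasing and strictly convex on (0,∞): φ'(x) < 0 and φ''(x) > 0 for all x > 0. -/

import Mathlib

open Set Filter

lemma stmt3_aux_left {f : ℝ → ℝ} {b d : ℝ} (hf : HasDerivAt f d b) (hd : 0 < d) :
    ∀ᶠ x in nhdsWithin b (Set.Iio b), f x < f b := by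
  have h := (hasDerivAt_iff_tendsto_slope.mp hf).eventually (eventually_gt_nhds hd)
  have h2 : ∀ᶠ x in nhdsWithin b (Set.Iio b), 0 < slope f b x :=
    h.filter_mono (nhdsWithin_mono b (fun x hx => ne_of_lt hx))
  filter_upwards [h2, self_mem_nhdsWithin] with x hx hx'
  have hxb : x - b < 0 := sub_neg.mpr hx'
  rw [slope_def_field] at hx
  rcases div_pos_iff.mp hx with ⟨h1, h2⟩ | ⟨h1, h2⟩ <;> linarith

lemma stmt3_aux_right {f : ℝ → ℝ} {b d : ℝ} (hf : HasDerivAt f d b) (hd : 0 < d) :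
    ∀ᶠ x in nhdsWithin b (Set.Ioi b), f b < f x := by
  have h := (hasDerivAt_iff_tendsto_slope.mp hf).eventually (eventually_gt_nhds hd)
  have h2 : ∀ᶠ x in nhdsWithin b (Set.Ioi b), 0 < slope f b x :=
    h.filter_mono (nhdsWithin_mono b (fun x hx => ne_of_gt hx))
  filter_upwards [h2, self_mem_nhdsWithin] with x hx hx'
  have hxb : 0 < x - b := sub_pos.mpr hx'
  rw [slope_def_field] at hx
  rcases div_pos_iff.mp hx with ⟨h1, h2⟩ | ⟨h1, h2⟩ <;> linarith

/-- If G is nondecreasing and differentiable on [0,∞), and φ is a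
positive, C³ solution on [0,∞) of (σ²/2)φ'' + (μ − G)φ' − qφ = 0 on (0,∞) with
φ(x) → 0 as x → ∞, then φ is strictly decreasing and strictly convex on (0,∞):
φ'(x) < 0 and φ''(x) > 0 for all x > 0. -/
theorem stmt_3 (μ σ q : ℝ) (hμ : 0 < μ) (hσ : 0 < σ) (hq : 0 < q)
    (G φ : ℝ → ℝ)
    (hGmono : MonotoneOn G (Set.Ici 0))
    (hGdiff : DifferentiableOn ℝ G (Set.Ici 0))
    (hφC : ContDiffOn ℝ 3 φ (Set.Ici 0))
    (hφpos : ∀ x ≥ (0:ℝ), 0 < φ x)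
    (hφlim : Filter.Tendsto φ Filter.atTop (nhds 0))
    (hODE : ∀ x > (0:ℝ),
      σ ^ 2 / 2 * deriv (deriv φ) x + (μ - G x) * deriv φ x - q * φ x = 0) :
    StrictAntiOn φ (Set.Ioi 0) ∧ StrictConvexOn ℝ (Set.Ioi 0) φ ∧
      ∀ x > (0:ℝ), deriv φ x < 0 ∧ 0 < deriv (deriv φ) x := by
  have hσ2 : (0:ℝ) < σ ^ 2 := by positivity
  -- regularity
  have h3 : ContDiffOn ℝ 3 φ (Ioi 0) := hφC.mono Set.Ioi_subset_Ici_self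
  have h2 : ContDiffOn ℝ 2 (deriv φ) (Ioi 0) :=
    h3.deriv_of_isOpen isOpen_Ioi (by norm_num)
  have h1 : ContDiffOn ℝ 1 (deriv (deriv φ)) (Ioi 0) :=
    h2.deriv_of_isOpen isOpen_Ioi (by norm_num)
  have hcφ : ContinuousOn φ (Ioi 0) := h3.continuousOn
  have hcφ' : ContinuousOn (deriv φ) (Ioi 0) := h2.continuousOn
  have hcψ : ContinuousOn (deriv (deriv φ)) (Ioi 0) := h1.continuousOn
  have hdφ : ∀ x ∈ Ioi (0:ℝ), HasDerivAt φ (deriv φ x) x := fun x hx =>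
    (((h3.differentiableOn (by norm_num)).differentiableAt
      (isOpen_Ioi.mem_nhds hx))).hasDerivAt
  have hdφ' : ∀ x ∈ Ioi (0:ℝ), HasDerivAt (deriv φ) (deriv (deriv φ) x) x := fun x hx =>
    (((h2.differentiableOn (by norm_num)).differentiableAt
      (isOpen_Ioi.mem_nhds hx))).hasDerivAt
  have hdψ : ∀ x ∈ Ioi (0:ℝ), HasDerivAt (deriv (deriv φ)) (deriv (deriv (deriv φ)) x) x :=
    fun x hx => (((h1.differentiableOn (by norm_num)).differentiableAt
      (isOpen_Ioi.mem_nhds hx))).hasDerivAt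
  -- the ODE at points where φ' vanishes gives φ'' > 0
  have hψ_at_zero : ∀ x > (0:ℝ), deriv φ x = 0 → 0 < deriv (deriv φ) x := by
    intro x hx h0
    have hode := hODE x hx
    have hpos := hφpos x hx.le
    rw [h0, mul_zero, add_zero] at hode
    have heq : deriv (deriv φ) x = q * φ x / (σ ^ 2 / 2) := by
      field_simp at hode ⊢; linarith
    rw [heq]
    exact div_pos (mul_pos hq hpos) (by positivity)
  -- L1 : derivative cannot be positive anywhere on (0,∞)
  have L1 : ∀ a, 0 < a → 0 < deriv φ a → False := by
    intro a ha hda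
    by_cases hT : ∃ x, a ≤ x ∧ deriv φ x ≤ 0
    · set T := {x : ℝ | a ≤ x ∧ deriv φ x ≤ 0} with hTdef
      have hTne : T.Nonempty := hT
      have hTbd : BddBelow T := ⟨a, fun t ht => ht.1⟩
      set b := sInf T with hbdef
      have hba : a ≤ b := le_csInf hTne (fun t ht => ht.1)
      have hb0 : 0 < b := lt_of_lt_of_le ha hba
      have hcb : ContinuousAt (deriv φ) b := hcφ'.continuousAt (isOpen_Ioi.mem_nhds hb0)
      have hnotpos : ¬ 0 < deriv φ b := by
        intro hpos
        have hev : ∀ᶠ x in nhds b, 0 < deriv φ x := hcb.eventually (eventually_gt_nhds hpos)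
        obtain ⟨ε, hε, hball⟩ := Metric.eventually_nhds_iff.mp hev
        obtain ⟨t, htT, htlt⟩ := Real.lt_sInf_add_pos hTne hε
        have hbt : b ≤ t := csInf_le hTbd htT
        have : dist t b < ε := by rw [Real.dist_eq, abs_of_nonneg (by linarith)]; linarith
        exact absurd (hball this) (not_lt.mpr htT.2)
      have hnotneg : ¬ deriv φ b < 0 := by
        intro hneg
        have hev : ∀ᶠ x in nhds b, deriv φ x < 0 := hcb.eventually (eventually_lt_nhds hneg)
        obtain ⟨ε, hε, hball⟩ := Metric.eventually_nhds_iff.mp hev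
        have hab : a < b := lt_of_le_of_ne hba (by intro h; rw [← h] at hneg; linarith)
        set x := (max a (b - ε) + b) / 2 with hxdef
        have hm : max a (b - ε) < b := max_lt hab (by linarith)
        have hx1 : a < x := lt_of_le_of_lt (le_max_left a (b - ε)) (by rw [hxdef]; linarith)
        have hx2 : x < b := by rw [hxdef]; linarith
        have hx3 : b - ε < x :=
          lt_of_le_of_lt (le_max_right a (b - ε)) (by rw [hxdef]; linarith)
        have hdist : dist x b < ε := by
          rw [Real.dist_eq, abs_of_nonpos (by linarith)]; linarith
        have hxT : x ∈ T := ⟨hx1.le, (hball hdist).le⟩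
        exact absurd (csInf_le hTbd hxT) (not_le.mpr hx2)
      have hb_eq : deriv φ b = 0 := by
        rcases lt_trichotomy (deriv φ b) 0 with h | h | h
        · exact absurd h hnotneg
        · exact h
        · exact absurd h hnotpos
      have hψb : 0 < deriv (deriv φ) b := hψ_at_zero b hb0 hb_eq
      have hab : a < b := lt_of_le_of_ne hba (by intro h; rw [← h] at hb_eq; linarith)
      have hev1 := stmt3_aux_left (hdφ' b hb0) hψb
      have hev2 : ∀ᶠ x in nhdsWithin b (Set.Iio b), a < x :=
        eventually_nhdsWithin_of_eventually_nhds (eventually_gt_nhds hab)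
      obtain ⟨x, ⟨hx1, hx2⟩, hx3⟩ := ((hev1.and hev2).and self_mem_nhdsWithin).exists
      have hxT : x ∈ T := ⟨hx2.le, by rw [hb_eq] at hx1; linarith⟩
      exact absurd (csInf_le hTbd hxT) (not_le.mpr hx3)
    · push_neg at hT
      have hmono : StrictMonoOn φ (Ici a) := by
        refine strictMonoOn_of_deriv_pos (convex_Ici a)
          (hcφ.mono (fun x hx => lt_of_lt_of_le ha hx)) ?_
        rw [interior_Ici]
        exact fun x hx => hT x (le_of_lt hx)
      have hev := hφlim.eventually (eventually_lt_nhds (hφpos a ha.le))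
      obtain ⟨x, hx1, hx2⟩ := (hev.and (eventually_ge_atTop (a + 1))).exists
      have : φ a < φ x := hmono self_mem_Ici (mem_Ici.mpr (by linarith)) (by linarith)
      linarith
  -- part 1 : deriv φ < 0 on (0,∞)
  have part1 : ∀ x > (0:ℝ), deriv φ x < 0 := by
    intro x hx
    rcases lt_trichotomy (deriv φ x) 0 with h | h | h
    · exact h
    · exfalso
      have hψx : 0 < deriv (deriv φ) x := hψ_at_zero x hx h
      have hev := stmt3_aux_right (hdφ' x hx) hψx
      obtain ⟨y, hy1, hy2⟩ := (hev.and self_mem_nhdsWithin).exists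
      exact L1 y (lt_trans hx hy2) (by rw [h] at hy1; exact hy1)
    · exact absurd h (not_lt.mpr (le_of_lt (by exact absurd h (fun h' => (L1 x hx h').elim))))
  -- G' ≥ 0 on (0,∞)
  have hG' : ∀ x > (0:ℝ), 0 ≤ deriv G x := by
    intro x hx
    have hGx : HasDerivAt G (deriv G x) x :=
      ((hGdiff x hx.le).differentiableAt (Ici_mem_nhds hx)).hasDerivAt
    have htend : Tendsto (slope G x) (nhdsWithin x (Set.Ioi x)) (nhds (deriv G x)) :=
      (hasDerivAt_iff_tendsto_slope.mp hGx).mono_left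
        (nhdsWithin_mono x (fun y hy => ne_of_gt hy))
    refine ge_of_tendsto htend ?_
    filter_upwards [self_mem_nhdsWithin] with y hy
    rw [slope_def_field]
    exact div_nonneg
      (sub_nonneg.mpr (hGmono hx.le (le_of_lt (lt_trans hx hy)) (le_of_lt hy)))
      (le_of_lt (sub_pos.mpr hy))
  -- the differentiated ODE
  have hkey : ∀ x > (0:ℝ),
      σ ^ 2 / 2 * deriv (deriv (deriv φ)) x + (μ - G x) * deriv (deriv φ) x
        = (q + deriv G x) * deriv φ x := by
    intro x hx
    have hGx : HasDerivAt G (deriv G x) x :=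
      ((hGdiff x hx.le).differentiableAt (Ici_mem_nhds hx)).hasDerivAt
    have hF : HasDerivAt
        (fun y => σ ^ 2 / 2 * deriv (deriv φ) y + (μ - G y) * deriv φ y - q * φ y)
        (σ ^ 2 / 2 * deriv (deriv (deriv φ)) x +
          ((0 - deriv G x) * deriv φ x + (μ - G x) * deriv (deriv φ) x) - q * deriv φ x) x :=
      ((((hdψ x hx).const_mul _).add
        (((hasDerivAt_const x μ).sub hGx).mul (hdφ' x hx)))).sub ((hdφ x hx).const_mul q)
    have heq : (fun y => σ ^ 2 / 2 * deriv (deriv φ) y + (μ - G y) * deriv φ y - q * φ y)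
        =ᶠ[nhds x] (fun _ => (0:ℝ)) := by
      filter_upwards [isOpen_Ioi.mem_nhds hx] with y hy
      exact hODE y hy
    have hF0 : deriv (fun y => σ ^ 2 / 2 * deriv (deriv φ) y + (μ - G y) * deriv φ y - q * φ y) x
        = 0 := by rw [heq.deriv_eq]; exact deriv_const x 0
    have := hF.deriv
    rw [hF0] at this
    linarith
  -- part 2 : deriv (deriv φ) > 0 on (0,∞)
  have part2 : ∀ x > (0:ℝ), 0 < deriv (deriv φ) x := by
    intro x₀ hx₀
    by_contra hcon
    push_neg at hcon
    set g : ℝ → ℝ := fun t => 2 / σ ^ 2 * (μ - G t) with hgdef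
    have hgc : ContinuousOn g (Ioi 0) :=
      continuousOn_const.mul
        (continuousOn_const.sub (hGdiff.continuousOn.mono Set.Ioi_subset_Ici_self))
    set A : ℝ → ℝ := fun x => ∫ t in x₀..x, g t with hAdef
    have hAd : ∀ x > (0:ℝ), HasDerivAt A (g x) x := by
      intro x hx
      have hsub : uIcc x₀ x ⊆ Ioi 0 := by
        intro t ht
        rcases Set.mem_uIcc.mp ht with ⟨ht1, _⟩ | ⟨ht1, _⟩
        · exact lt_of_lt_of_le hx₀ ht1
        · exact lt_of_lt_of_le hx ht1
      exact intervalIntegral.integral_hasDerivAt_right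
        ((hgc.mono hsub).intervalIntegrable)
        (hgc.stronglyMeasurableAtFilter isOpen_Ioi x hx)
        (hgc.continuousAt (isOpen_Ioi.mem_nhds hx))
    set h : ℝ → ℝ := fun x => Real.exp (A x) * deriv (deriv φ) x with hhdef
    have hhd : ∀ x > (0:ℝ), HasDerivAt h
        (Real.exp (A x) * g x * deriv (deriv φ) x +
          Real.exp (A x) * deriv (deriv (deriv φ)) x) x := by
      intro x hx
      have hder : HasDerivAt (fun y => Real.exp (A y) * deriv (deriv φ) y) _ x :=
        ((hAd x hx).exp.mul (hdψ x hx))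
      convert hder using 1
      try ring
    have hhneg : ∀ x > (0:ℝ), deriv h x < 0 := by
      intro x hx
      rw [(hhd x hx).deriv]
      have hk := hkey x hx
      have hG'x := hG' x hx
      have hφ'x := part1 x hx
      have hexp := Real.exp_pos (A x)
      have h2' : (q + deriv G x) * deriv φ x < 0 :=
        mul_neg_of_pos_of_neg (by linarith) hφ'x
      have h3' : g x * deriv (deriv φ) x + deriv (deriv (deriv φ)) x
          = 2 / σ ^ 2 * ((μ - G x) * deriv (deriv φ) x
            + σ ^ 2 / 2 * deriv (deriv (deriv φ)) x) := by
        rw [hgdef]; field_simp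
      have h4' : Real.exp (A x) * g x * deriv (deriv φ) x +
          Real.exp (A x) * deriv (deriv (deriv φ)) x
          = Real.exp (A x) * (g x * deriv (deriv φ) x + deriv (deriv (deriv φ)) x) := by ring
      rw [h4', h3']
      refine mul_neg_of_pos_of_neg hexp (mul_neg_of_pos_of_neg (by positivity) ?_)
      rw [show (μ - G x) * deriv (deriv φ) x + σ ^ 2 / 2 * deriv (deriv (deriv φ)) x
          = (q + deriv G x) * deriv φ x by linarith]
      exact h2'
    have hconth : ContinuousOn h (Ici x₀) := fun x hx =>
      ((hhd x (lt_of_lt_of_le hx₀ hx)).continuousAt).continuousWithinAt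
    have hanti : StrictAntiOn h (Ici x₀) := by
      refine strictAntiOn_of_deriv_neg (convex_Ici x₀) hconth ?_
      rw [interior_Ici]
      exact fun x hx => hhneg x (lt_trans hx₀ hx)
    have hψneg : ∀ x > x₀, deriv (deriv φ) x < 0 := by
      intro x hx
      have hhx : h x < h x₀ := hanti self_mem_Ici (mem_Ici.mpr hx.le) hx
      have hx0val : h x₀ ≤ 0 :=
        mul_nonpos_of_nonneg_of_nonpos (Real.exp_pos _).le hcon
      have h5 : Real.exp (A x) * deriv (deriv φ) x < 0 := lt_of_lt_of_le hhx hx0val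
      nlinarith [Real.exp_pos (A x)]
    -- deriv φ is strictly decreasing past x₀, forcing φ → -∞
    have hφ'anti : StrictAntiOn (deriv φ) (Ici x₀) := by
      refine strictAntiOn_of_deriv_neg (convex_Ici x₀)
        (hcφ'.mono (fun x hx => lt_of_lt_of_le hx₀ hx)) ?_
      rw [interior_Ici]
      exact fun x hx => hψneg x hx
    set x₁ := x₀ + 1 with hx₁def
    have hx₁ : 0 < x₁ := by simp [hx₁def]; linarith
    have hc : deriv φ x₁ < 0 := part1 x₁ hx₁
    have hu : StrictAntiOn (fun y => φ y - deriv φ x₁ * y) (Ici x₁) := by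
      refine strictAntiOn_of_deriv_neg (convex_Ici x₁) ?_ ?_
      · intro y hy
        have hy0 : (0:ℝ) < y := lt_of_lt_of_le hx₁ hy
        have hmul : HasDerivAt (fun y : ℝ => deriv φ x₁ * y) (deriv φ x₁) y := by
          simpa using (hasDerivAt_id y).const_mul (deriv φ x₁)
        exact ((hdφ y hy0).sub hmul).continuousAt.continuousWithinAt
      · rw [interior_Ici]
        intro y hy
        have hy0 : (0:ℝ) < y := lt_of_lt_of_le hx₁ hy.le
        have hmul : HasDerivAt (fun y : ℝ => deriv φ x₁ * y) (deriv φ x₁) y := by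
          simpa using (hasDerivAt_id y).const_mul (deriv φ x₁)
        rw [HasDerivAt.deriv (f := fun y => φ y - deriv φ x₁ * y) ((hdφ y hy0).sub hmul)]
        have hyy : x₁ < y := hy
        have hle : x₀ ≤ x₁ := by simp [hx₁def]
        have : deriv φ y < deriv φ x₁ :=
          hφ'anti (mem_Ici.mpr hle) (mem_Ici.mpr (le_of_lt (lt_of_le_of_lt hle hyy))) hyy
        linarith
    set X := x₁ + φ x₁ / (-(deriv φ x₁)) + 1 with hXdef
    have hdivpos : 0 < φ x₁ / (-(deriv φ x₁)) := div_pos (hφpos x₁ hx₁.le) (by linarith)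
    have hX : x₁ < X := by rw [hXdef]; linarith
    have huX : φ X - deriv φ x₁ * X < φ x₁ - deriv φ x₁ * x₁ :=
      hu self_mem_Ici (mem_Ici.mpr hX.le) hX
    have hcancel : deriv φ x₁ * (φ x₁ / (-(deriv φ x₁))) = -φ x₁ := by
      rw [mul_comm, div_neg, neg_mul, div_mul_cancel₀ _ (ne_of_lt hc)]
    have hXmul : deriv φ x₁ * X
        = deriv φ x₁ * x₁ + deriv φ x₁ * (φ x₁ / (-(deriv φ x₁))) + deriv φ x₁ := by
      rw [hXdef]; ring
    have hφX : 0 < φ X := hφpos X (by linarith)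
    rw [hXmul, hcancel] at huX
    linarith
  refine ⟨?_, ?_, fun x hx => ⟨part1 x hx, part2 x hx⟩⟩
  · refine strictAntiOn_of_deriv_neg (convex_Ioi 0) hcφ ?_
    rw [interior_Ioi]
    exact fun x hx => part1 x hx
  · refine strictConvexOn_of_deriv2_pos (convex_Ioi 0) hcφ ?_
    rw [interior_Ioi]
    intro x hx
    exact part2 x hx
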